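/- arXiv:1309.3195 — 3 statements merged into one kernel-verified Lean document; each statement's English description precedes it below -/
import Mathlib

section
/- (Proposition 1, comparison part.) Let k ≥ 2, a_1,…,a_k ≥ 0, let d be an integer with 2 ≤ d ≤ k and a_d > 0, let σ ∈ (0,1], and let c > 0. Define P(x) = ∑_{j=1}^{k} j·a_j·x^{j−1} and Q_σ(x) = P(x) + σ·a_d − σ·d·a_d·x^{d−1}. Define sequences y₀ = z₀ = 1, y_{t+1} = exp(−c·P(1 − y_t)), z_{t+1} = exp(−c·Q_σ(1 − z_t)). If d·(1 − y_t)^{d−1} < 1 for every t ≥ 0, then z_t < y_t for every t ≥ 1. -/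
/-- Proposition 1 (comparison part): with `P(x) = ∑_{j=1}^{k} j·a_j·x^{j−1}`,
`Q_σ(x) = P(x) + σ·a_d − σ·d·a_d·x^{d−1}`, and And-Or tree iterations
`y₀ = z₀ = 1`, `y_{t+1} = exp(−c·P(1−y_t))`, `z_{t+1} = exp(−c·Q_σ(1−z_t))`,
if `d·(1−y_t)^{d−1} < 1` for every `t ≥ 0`, then `z_t < y_t` for every `t ≥ 1`. -/
theorem proposition1_comparison (k : ℕ) (hk : 2 ≤ k) (a : ℕ → ℝ)
    (ha : ∀ j ∈ Finset.Icc 1 k, 0 ≤ a j)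
    (d : ℕ) (hd2 : 2 ≤ d) (hdk : d ≤ k) (had : 0 < a d)
    (σ : ℝ) (hσ0 : 0 < σ) (hσ1 : σ ≤ 1) (c : ℝ) (hc : 0 < c)
    (P Q : ℝ → ℝ)
    (hP : ∀ x, P x = ∑ j ∈ Finset.Icc 1 k, (j : ℝ) * a j * x ^ (j - 1))
    (hQ : ∀ x, Q x = P x + σ * a d - σ * (d : ℝ) * a d * x ^ (d - 1))
    (y z : ℕ → ℝ) (hy0 : y 0 = 1) (hz0 : z 0 = 1)
    (hy : ∀ t, y (t + 1) = Real.exp (-(c * P (1 - y t))))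
    (hz : ∀ t, z (t + 1) = Real.exp (-(c * Q (1 - z t))))
    (hcrit : ∀ t, (d : ℝ) * (1 - y t) ^ (d - 1) < 1) :
    ∀ t, 1 ≤ t → z t < y t := by
  -- monotonicity of power sums with nonneg coefficients
  have hsum_mono : ∀ (b : ℕ → ℝ), (∀ j ∈ Finset.Icc 1 k, 0 ≤ b j) →
      ∀ x u : ℝ, 0 ≤ x → x ≤ u →
      ∑ j ∈ Finset.Icc 1 k, (j : ℝ) * b j * x ^ (j - 1) ≤
      ∑ j ∈ Finset.Icc 1 k, (j : ℝ) * b j * u ^ (j - 1) := by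
    intro b hb x u hx hxu
    apply Finset.sum_le_sum
    intro j hj
    exact mul_le_mul_of_nonneg_left (pow_le_pow_left₀ hx hxu _)
      (mul_nonneg (Nat.cast_nonneg j) (hb j hj))
  have hPnonneg : ∀ x : ℝ, 0 ≤ x → 0 ≤ P x := by
    intro x hx; rw [hP]
    apply Finset.sum_nonneg
    intro j hj
    exact mul_nonneg (mul_nonneg (Nat.cast_nonneg j) (ha j hj)) (pow_nonneg hx _)
  have hy1 : ∀ t, y t ≤ 1 := by
    intro t; induction t with
    | zero => rw [hy0]
    | succ t ih =>
      rw [hy]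
      have h0 := hPnonneg (1 - y t) (by linarith)
      calc Real.exp (-(c * P (1 - y t))) ≤ Real.exp 0 :=
            Real.exp_le_exp.mpr (by nlinarith)
        _ = 1 := Real.exp_zero
  -- rewrite Q as a nonneg-coefficient power sum plus a constant
  set b : ℕ → ℝ := fun j => if j = d then (1 - σ) * a d else a j with hb_def
  have hbnn : ∀ j ∈ Finset.Icc 1 k, 0 ≤ b j := by
    intro j hj
    by_cases h : j = d
    · simp only [hb_def, h, if_true]
      exact mul_nonneg (by linarith) had.le
    · simpa only [hb_def, h, if_false] using ha j hj
  have hdmem : d ∈ Finset.Icc 1 k := Finset.mem_Icc.mpr ⟨by omega, hdk⟩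
  have hQ' : ∀ x, Q x = (∑ j ∈ Finset.Icc 1 k, (j : ℝ) * b j * x ^ (j - 1)) + σ * a d := by
    intro x
    rw [hQ, hP]
    rw [← Finset.sum_erase_add _ _ hdmem,
        ← Finset.sum_erase_add _ (fun j : ℕ => (j : ℝ) * b j * x ^ (j - 1)) hdmem]
    have heq : ∑ j ∈ (Finset.Icc 1 k).erase d, (j : ℝ) * b j * x ^ (j - 1)
        = ∑ j ∈ (Finset.Icc 1 k).erase d, (j : ℝ) * a j * x ^ (j - 1) := by
      apply Finset.sum_congr rfl
      intro j hj
      simp only [hb_def, Finset.ne_of_mem_erase hj, if_false]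
    rw [heq]
    simp only [hb_def, if_true]
    ring
  have hQmono : ∀ x u : ℝ, 0 ≤ x → x ≤ u → Q x ≤ Q u := by
    intro x u hx hxu
    rw [hQ' x, hQ' u]
    have := hsum_mono b hbnn x u hx hxu
    linarith
  -- strict gap at the y-points
  have hQP : ∀ t, P (1 - y t) < Q (1 - y t) := by
    intro t
    rw [hQ]
    have h1 := hcrit t
    have h2 : 0 < σ * a d := mul_pos hσ0 had
    nlinarith [mul_pos h2 (show (0:ℝ) < 1 - (d : ℝ) * (1 - y t) ^ (d - 1) by linarith)]
  have key : ∀ t, z t ≤ y t → z (t + 1) < y (t + 1) := by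
    intro t hzy
    rw [hy, hz]
    apply Real.exp_lt_exp.mpr
    have h1 : Q (1 - y t) ≤ Q (1 - z t) :=
      hQmono _ _ (by linarith [hy1 t]) (by linarith)
    have h2 : P (1 - y t) < Q (1 - z t) := lt_of_lt_of_le (hQP t) h1
    nlinarith
  have hle : ∀ t, z t ≤ y t := by
    intro t; induction t with
    | zero => rw [hy0, hz0]
    | succ t ih => exact (key t ih).le
  intro t ht
  obtain ⟨s, rfl⟩ : ∃ s, t = s + 1 := ⟨t - 1, by omega⟩
  exact key s (hle s)
end

section
/- (Proposition 1, optimality of σ = 1.) Let k ≥ 2, a_1,…,a_k ≥ 0, let d be an integer with 2 ≤ d ≤ k and a_d > 0, let 0 < σ ≤ σ' ≤ 1, and let c > 0. Define Q_σ(x) = ∑_{j=1}^{k} j·a_j·x^{j−1} + σ·a_d − σ·d·a_d·x^{d−1}, and sequences z₀^σ = z₀^{σ'} = 1, z_{t+1}^σ = exp(−c·Q_σ(1 − z_t^σ)), z_{t+1}^{σ'} = exp(−c·Q_{σ'}(1 − z_t^{σ'})). If d·(1 − z_t^σ)^{d−1} < 1 for every t ≥ 0, then z_t^{σ'} ≤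 z_t^σ for every t ≥ 0; i.e., the bit error probability at every iteration is minimized over σ ∈ (0,1] by σ = 1. -/
/-- Proposition 1 (optimality of `σ = 1`): with
`Q_σ(x) = ∑_{j=1}^{k} j·a_j·x^{j−1} + σ·a_d − σ·d·a_d·x^{d−1}` and And-Or tree
iterations `z₀^σ = z₀^{σ'} = 1`, `z_{t+1}^σ = exp(−c·Q_σ(1−z_t^σ))`,
`z_{t+1}^{σ'} = exp(−c·Q_{σ'}(1−z_t^{σ'}))` for `0 < σ ≤ σ' ≤ 1`, if
`d·(1−z_t^σ)^{d−1} < 1` for every `t`, then `z_t^{σ'} ≤ z_t^σ` for every `t`; in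
particular the bit error probability at every iteration is minimized by `σ = 1`. -/
theorem proposition1_optimality (k : ℕ) (hk : 2 ≤ k) (a : ℕ → ℝ)
    (ha : ∀ j ∈ Finset.Icc 1 k, 0 ≤ a j)
    (d : ℕ) (hd2 : 2 ≤ d) (hdk : d ≤ k) (had : 0 < a d)
    (σ σ' : ℝ) (hσ0 : 0 < σ) (hσσ' : σ ≤ σ') (hσ'1 : σ' ≤ 1) (c : ℝ) (hc : 0 < c)
    (Q : ℝ → ℝ → ℝ)
    (hQ : ∀ s x, Q s x = (∑ j ∈ Finset.Icc 1 k, (j : ℝ) * a j * x ^ (j - 1))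
        + s * a d - s * (d : ℝ) * a d * x ^ (d - 1))
    (zσ zσ' : ℕ → ℝ) (hzσ0 : zσ 0 = 1) (hzσ'0 : zσ' 0 = 1)
    (hzσ : ∀ t, zσ (t + 1) = Real.exp (-(c * Q σ (1 - zσ t))))
    (hzσ' : ∀ t, zσ' (t + 1) = Real.exp (-(c * Q σ' (1 - zσ' t))))
    (hcrit : ∀ t, (d : ℝ) * (1 - zσ t) ^ (d - 1) < 1) :
    ∀ t, zσ' t ≤ zσ t := by
  have hdmem : d ∈ Finset.Icc 1 k := Finset.mem_Icc.mpr ⟨le_trans (by norm_num) hd2, hdk⟩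
  -- monotonicity of Q s on [0, ∞) for 0 ≤ s ≤ 1
  have hmono : ∀ (s x y : ℝ), 0 ≤ s → s ≤ 1 → 0 ≤ x → x ≤ y → Q s x ≤ Q s y := by
    intro s x y hs0 hs1 hx hxy
    rw [hQ, hQ]
    have hrep : ∀ z : ℝ, s * (d : ℝ) * a d * z ^ (d - 1)
        = ∑ j ∈ Finset.Icc 1 k, (if j = d then s * (j : ℝ) * a j * z ^ (j - 1) else 0) := by
      intro z
      rw [Finset.sum_ite_eq' (Finset.Icc 1 k) d (fun j => s * (j : ℝ) * a j * z ^ (j - 1))]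
      simp [hdmem]
    rw [hrep x, hrep y]
    have hsum : ∀ z : ℝ,
        (∑ j ∈ Finset.Icc 1 k, (j : ℝ) * a j * z ^ (j - 1)) + s * a d
          - (∑ j ∈ Finset.Icc 1 k, (if j = d then s * (j : ℝ) * a j * z ^ (j - 1) else 0))
        = (∑ j ∈ Finset.Icc 1 k,
            ((j : ℝ) * a j * z ^ (j - 1)
              - (if j = d then s * (j : ℝ) * a j * z ^ (j - 1) else 0))) + s * a d := by
      intro z
      rw [Finset.sum_sub_distrib]; ring
    rw [hsum x, hsum y]
    apply add_le_add ?_ le_rfl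
    apply Finset.sum_le_sum
    intro j hj
    by_cases hjd : j = d
    · subst hjd
      simp only [if_pos rfl, ite_true, if_true]
      have hpow := pow_le_pow_left₀ hx hxy (j - 1)
      have hco : 0 ≤ (1 - s) * ((j : ℝ) * a j) := by
        apply mul_nonneg (by linarith)
        exact mul_nonneg (Nat.cast_nonneg j) (ha j hj)
      nlinarith [mul_nonneg hco (sub_nonneg.mpr hpow)]
    · simp only [if_neg hjd, sub_zero]
      have hco : 0 ≤ (j : ℝ) * a j := mul_nonneg (Nat.cast_nonneg j) (ha j hj)
      exact mul_le_mul_of_nonneg_left (pow_le_pow_left₀ hx hxy _) hco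
  -- nonnegativity of the power sum
  have hsumnn : ∀ x : ℝ, 0 ≤ x → 0 ≤ ∑ j ∈ Finset.Icc 1 k, (j : ℝ) * a j * x ^ (j - 1) := by
    intro x hx
    apply Finset.sum_nonneg
    intro j hj
    exact mul_nonneg (mul_nonneg (Nat.cast_nonneg j) (ha j hj)) (pow_nonneg hx _)
  -- main induction with strengthened invariant
  have main : ∀ t, zσ t ≤ 1 ∧ 0 < zσ' t ∧ zσ' t ≤ zσ t := by
    intro t
    induction t with
    | zero =>
      refine ⟨le_of_eq hzσ0, ?_, ?_⟩
      · rw [hzσ'0]; norm_num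
      · rw [hzσ'0, hzσ0]
    | succ t ih =>
      obtain ⟨h1, h2, h3⟩ := ih
      set x := 1 - zσ t with hxdef
      set x' := 1 - zσ' t with hx'def
      have hx0 : 0 ≤ x := by simp [hxdef]; linarith
      have hxx' : x ≤ x' := by simp [hxdef, hx'def]; linarith
      have hQσx : 0 ≤ Q σ x := by
        rw [hQ]
        have h5 : σ * (d : ℝ) * a d * x ^ (d - 1) ≤ σ * a d := by
          have := hcrit t
          have : σ * ((d : ℝ) * x ^ (d - 1)) ≤ σ * 1 :=
            mul_le_mul_of_nonneg_left (le_of_lt this) (le_of_lt hσ0)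
          nlinarith
        have := hsumnn x hx0
        linarith
      have hQle : Q σ x ≤ Q σ' x' := by
        have step1 : Q σ x ≤ Q σ' x := by
          rw [hQ, hQ]
          have hfac : 0 ≤ (σ' - σ) * (a d * (1 - (d : ℝ) * x ^ (d - 1))) := by
            apply mul_nonneg (by linarith)
            apply mul_nonneg (le_of_lt had)
            have := hcrit t
            linarith
          nlinarith
        have step2 : Q σ' x ≤ Q σ' x' :=
          hmono σ' x x' (by linarith) hσ'1 hx0 hxx'
        linarith
      refine ⟨?_, ?_, ?_⟩
      · rw [hzσ t]
        have : -(c * Q σ x) ≤ 0 := by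
          have := mul_nonneg (le_of_lt hc) hQσx
          linarith
        calc Real.exp (-(c * Q σ x)) ≤ Real.exp 0 := Real.exp_le_exp.mpr this
          _ = 1 := Real.exp_zero
      · rw [hzσ' t]; exact Real.exp_pos _
      · rw [hzσ t, hzσ' t]
        apply Real.exp_le_exp.mpr
        have := mul_le_mul_of_nonneg_left hQle (le_of_lt hc)
        linarith
  intro t
  exact (main t).2.2
end

section
/- (Limit version of Proposition 1.) Under the hypotheses of the comparison part of Proposition 1 — k ≥ 2, a_1,…,a_k ≥ 0, integer d with 2 ≤ d ≤ k and a_d > 0, σ ∈ (0,1], c > 0, P(x) = ∑_{j=1}^{k} j·a_j·x^{j−1}, Q_σ(x) = P(x) + σ·a_d − σ·d·a_d·x^{d−1}, sequences y₀ = z₀ = 1, y_{t+1} = exp(−c·P(1 − y_t)), z_{t+1} = exp(−c·Q_σ(1 − z_t)), and d·(1 − y_t)^{d−1} < 1 for all t — both sequences converge, their limits y* and z* satisfy the respective fixed-point equations y* = exp(−c·P(1 − y*)) and z* = exp(−c·Q_σ(1 − z*)), and z* ≤ y*. -/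
open Filter

/-- Limit version of Proposition 1: under the hypotheses of the comparison part, both
And-Or tree iterations converge, the limits `y*` and `z*` satisfy the respective
fixed-point equations, and `z* ≤ y*`. -/
theorem proposition1_limit (k : ℕ) (hk : 2 ≤ k) (a : ℕ → ℝ)
    (ha : ∀ j ∈ Finset.Icc 1 k, 0 ≤ a j)
    (d : ℕ) (hd2 : 2 ≤ d) (hdk : d ≤ k) (had : 0 < a d)
    (σ : ℝ) (hσ0 : 0 < σ) (hσ1 : σ ≤ 1) (c : ℝ) (hc : 0 < c)
    (P Q : ℝ → ℝ)
    (hP : ∀ x, P x = ∑ j ∈ Finset.Icc 1 k, (j : ℝ) * a j * x ^ (j - 1))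
    (hQ : ∀ x, Q x = P x + σ * a d - σ * (d : ℝ) * a d * x ^ (d - 1))
    (y z : ℕ → ℝ) (hy0 : y 0 = 1) (hz0 : z 0 = 1)
    (hy : ∀ t, y (t + 1) = Real.exp (-(c * P (1 - y t))))
    (hz : ∀ t, z (t + 1) = Real.exp (-(c * Q (1 - z t))))
    (hcrit : ∀ t, (d : ℝ) * (1 - y t) ^ (d - 1) < 1) :
    ∃ ystar zstar : ℝ,
      Tendsto y atTop (nhds ystar) ∧ Tendsto z atTop (nhds zstar) ∧
      ystar = Real.exp (-(c * P (1 - ystar))) ∧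
      zstar = Real.exp (-(c * Q (1 - zstar))) ∧
      zstar ≤ ystar := by
  have hdI : d ∈ Finset.Icc 1 k := Finset.mem_Icc.2 ⟨le_trans one_le_two hd2, hdk⟩
  -- Strong monotonicity of P: the increase is at least the degree-d term's increase.
  have hPd : ∀ s u : ℝ, 0 ≤ s → s ≤ u →
      P s + (d : ℝ) * a d * (u ^ (d - 1) - s ^ (d - 1)) ≤ P u := by
    intro s u hs hsu
    rw [hP, hP]
    have h1 : ∀ j ∈ Finset.Icc 1 k,
        (0:ℝ) ≤ (j:ℝ) * a j * u ^ (j-1) - (j:ℝ) * a j * s ^ (j-1) := by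
      intro j hj
      have hp : s ^ (j-1) ≤ u ^ (j-1) := pow_le_pow_left₀ hs hsu _
      nlinarith [mul_nonneg (mul_nonneg (Nat.cast_nonneg j : (0:ℝ) ≤ (j:ℝ)) (ha j hj))
        (sub_nonneg.2 hp)]
    have h2 := Finset.single_le_sum h1 hdI
    rw [Finset.sum_sub_distrib] at h2
    have hid : (d:ℝ) * a d * (u^(d-1) - s^(d-1))
        = (d:ℝ) * a d * u^(d-1) - (d:ℝ) * a d * s^(d-1) := by ring
    linarith
  have hPmono : ∀ s u : ℝ, 0 ≤ s → s ≤ u → P s ≤ P u := by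
    intro s u hs hsu
    have h1 := hPd s u hs hsu
    have hp : s ^ (d-1) ≤ u ^ (d-1) := pow_le_pow_left₀ hs hsu _
    nlinarith [mul_nonneg (mul_nonneg (Nat.cast_nonneg d : (0:ℝ) ≤ (d:ℝ)) had.le)
      (sub_nonneg.2 hp)]
  have hP0 : ∀ x : ℝ, 0 ≤ x → 0 ≤ P x := by
    intro x hx
    rw [hP]
    exact Finset.sum_nonneg fun j hj => mul_nonneg
      (mul_nonneg (Nat.cast_nonneg j) (ha j hj)) (pow_nonneg hx _)
  have hQmono : ∀ s u : ℝ, 0 ≤ s → s ≤ u → Q s ≤ Q u := by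
    intro s u hs hsu
    rw [hQ, hQ]
    have h1 := hPd s u hs hsu
    have hp : s ^ (d-1) ≤ u ^ (d-1) := pow_le_pow_left₀ hs hsu _
    nlinarith [mul_nonneg (mul_nonneg (mul_nonneg (sub_nonneg.2 hσ1)
      (Nat.cast_nonneg d : (0:ℝ) ≤ (d:ℝ))) had.le) (sub_nonneg.2 hp)]
  have hd1 : d - 1 ≠ 0 := by omega
  have hQ0 : ∀ x : ℝ, 0 ≤ x → 0 ≤ Q x := by
    intro x hx
    have h1 : 0 ≤ Q 0 := by
      rw [hQ, zero_pow hd1]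
      have := hP0 0 le_rfl
      nlinarith [mul_nonneg hσ0.le had.le]
    exact le_trans h1 (hQmono 0 x le_rfl hx)
  -- bounds for y
  have hyb : ∀ t, 0 < y t ∧ y t ≤ 1 := by
    intro t
    induction t with
    | zero => rw [hy0]; exact ⟨one_pos, le_rfl⟩
    | succ t ih =>
      rw [hy t]
      refine ⟨Real.exp_pos _, Real.exp_le_one_iff.2 ?_⟩
      have h1 : 0 ≤ P (1 - y t) := hP0 _ (by linarith [ih.2])
      nlinarith
  have hzb : ∀ t, 0 < z t ∧ z t ≤ 1 := by
    intro t
    induction t with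
    | zero => rw [hz0]; exact ⟨one_pos, le_rfl⟩
    | succ t ih =>
      rw [hz t]
      refine ⟨Real.exp_pos _, Real.exp_le_one_iff.2 ?_⟩
      have h1 : 0 ≤ Q (1 - z t) := hQ0 _ (by linarith [ih.2])
      nlinarith
  -- antitone
  have hyanti : ∀ t, y (t + 1) ≤ y t := by
    intro t
    induction t with
    | zero =>
      rw [hy 0, hy0]
      refine Real.exp_le_one_iff.2 ?_
      have h0 : (1:ℝ) - 1 = 0 := by norm_num
      rw [h0]
      nlinarith [hP0 0 le_rfl]
    | succ t ih =>
      rw [hy (t+1)]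
      conv_rhs => rw [hy t]
      apply Real.exp_le_exp.2
      have h1 : P (1 - y (t+1)) ≥ P (1 - y t) :=
        hPmono _ _ (by linarith [(hyb t).2]) (by linarith)
      nlinarith
  have hzanti : ∀ t, z (t + 1) ≤ z t := by
    intro t
    induction t with
    | zero =>
      rw [hz 0, hz0]
      refine Real.exp_le_one_iff.2 ?_
      have h0 : (1:ℝ) - 1 = 0 := by norm_num
      rw [h0]
      nlinarith [hQ0 0 le_rfl]
    | succ t ih =>
      rw [hz (t+1)]
      conv_rhs => rw [hz t]
      apply Real.exp_le_exp.2
      have h1 : Q (1 - z (t+1)) ≥ Q (1 - z t) :=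
        hQmono _ _ (by linarith [(hzb t).2]) (by linarith)
      nlinarith
  have hyA : Antitone y := antitone_nat_of_succ_le hyanti
  have hzA : Antitone z := antitone_nat_of_succ_le hzanti
  have hyBdd : BddBelow (Set.range y) := ⟨0, fun x ⟨t, ht⟩ => ht ▸ (hyb t).1.le⟩
  have hzBdd : BddBelow (Set.range z) := ⟨0, fun x ⟨t, ht⟩ => ht ▸ (hzb t).1.le⟩
  have hyT : Tendsto y atTop (nhds (⨅ t, y t)) := tendsto_atTop_ciInf hyA hyBdd
  have hzT : Tendsto z atTop (nhds (⨅ t, z t)) := tendsto_atTop_ciInf hzA hzBdd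
  set ystar := ⨅ t, y t with hys
  set zstar := ⨅ t, z t with hzs
  -- continuity
  have hPc : Continuous P := by
    have : P = fun x => ∑ j ∈ Finset.Icc 1 k, (j : ℝ) * a j * x ^ (j - 1) := funext hP
    rw [this]
    exact continuous_finset_sum _ fun j _ => continuous_const.mul (continuous_pow _)
  have hQc : Continuous Q := by
    have : Q = fun x => P x + σ * a d - σ * (d : ℝ) * a d * x ^ (d - 1) := funext hQ
    rw [this]
    fun_prop
  have hFy : Continuous (fun x : ℝ => Real.exp (-(c * P (1 - x)))) := by fun_prop
  have hFz : Continuous (fun x : ℝ => Real.exp (-(c * Q (1 - x)))) := by fun_prop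
  -- fixed point equations
  have hyfix : ystar = Real.exp (-(c * P (1 - ystar))) := by
    have h1 : Tendsto (fun t => y (t + 1)) atTop (nhds ystar) :=
      hyT.comp (tendsto_add_atTop_nat 1)
    have h2 : Tendsto (fun t => Real.exp (-(c * P (1 - y t)))) atTop
        (nhds (Real.exp (-(c * P (1 - ystar))))) := (hFy.tendsto ystar).comp hyT
    have h3 : (fun t => y (t + 1)) = fun t => Real.exp (-(c * P (1 - y t))) := funext hy
    rw [h3] at h1
    exact tendsto_nhds_unique h1 h2
  have hzfix : zstar = Real.exp (-(c * Q (1 - zstar))) := by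
    have h1 : Tendsto (fun t => z (t + 1)) atTop (nhds zstar) :=
      hzT.comp (tendsto_add_atTop_nat 1)
    have h2 : Tendsto (fun t => Real.exp (-(c * Q (1 - z t)))) atTop
        (nhds (Real.exp (-(c * Q (1 - zstar))))) := (hFz.tendsto zstar).comp hzT
    have h3 : (fun t => z (t + 1)) = fun t => Real.exp (-(c * Q (1 - z t))) := funext hz
    rw [h3] at h1
    exact tendsto_nhds_unique h1 h2
  -- comparison z t ≤ y t
  have hzy : ∀ t, z t ≤ y t := by
    intro t
    induction t with
    | zero => rw [hy0, hz0]
    | succ t ih =>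
      rw [hy t, hz t]
      apply Real.exp_le_exp.2
      have hkey : P (1 - y t) ≤ Q (1 - z t) := by
        set s := 1 - y t with hsdef
        set u := 1 - z t with hudef
        have hs0 : 0 ≤ s := by simp only [hsdef]; linarith [(hyb t).2]
        have hsu : s ≤ u := by simp only [hsdef, hudef]; linarith
        have hpd := hPd s u hs0 hsu
        have hp : s ^ (d-1) ≤ u ^ (d-1) := pow_le_pow_left₀ hs0 hsu _
        have hcr : (d : ℝ) * s ^ (d - 1) < 1 := hcrit t
        rw [hQ]
        nlinarith [mul_nonneg (mul_nonneg (mul_nonneg (sub_nonneg.2 hσ1)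
          (Nat.cast_nonneg d : (0:ℝ) ≤ (d:ℝ))) had.le) (sub_nonneg.2 hp),
          mul_nonneg (mul_nonneg hσ0.le had.le) (sub_nonneg.2 hcr.le)]
      nlinarith
  refine ⟨ystar, zstar, hyT, hzT, hyfix, hzfix, ?_⟩
  exact le_of_tendsto_of_tendsto' hzT hyT hzy
end
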